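/- Let κ ≥ 2^{ℵ₁} be a regular cardinal and let Φ be a function from the collection of subsets of H_κ of cardinality 2^{ℵ₁} into the nonstationary ideal on ω₁ (i.e., Φ(X) is a non-stationary subset of ω₁ for each X). Then there exists a closed unbounded set C ⊆ ω₁ and a set S of subsets of H_κ of size 2^{ℵ₁} which is *-stationary (meaning: for every structure 𝔐 of finite type with universe H_κ there is X ∈ S closed under ω-sequences with (X;...) ≺ 𝔐), such that C ∩ Φ(X) = ∅ for every X ∈ S. -/

import Mathlib

open Cardinal Set FirstOrder

noncomputable section

/-- The first uncountable ordinal. -/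
def omega1 : Ordinal := (Cardinal.aleph 1).ord

/-- `C` is a closed unbounded subset of the ordinal `κ`. -/
def IsClubIn (C : Set Ordinal) (κ : Ordinal) : Prop :=
  C ⊆ Set.Iio κ ∧ (∀ a < κ, ∃ b ∈ C, a < b) ∧
    ∀ s : Set Ordinal, s ⊆ C → s.Nonempty → sSup s < κ → sSup s ∈ C

/-- `S` is a stationary subset of the ordinal `κ`: it meets every club. -/
def IsStationaryIn (S : Set Ordinal) (κ : Ordinal) : Prop :=
  S ⊆ Set.Iio κ ∧ ∀ C : Set Ordinal, IsClubIn C κ → (S ∩ C).Nonempty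

/-- A language of finite type: finitely many function and relation symbols. -/
def FinType (L : FirstOrder.Language.{0, 0}) : Prop :=
  Finite (Σ n, L.Functions n) ∧ Finite (Σ n, L.Relations n)

/-- `X` is closed under `ω`-sequences, where `code` is the (fixed) coding of
`ω`-sequences of elements of `H` as elements of `H` (abstracting `H = H_κ`). -/
def OmClosed {H : Type} (code : (ℕ → H) → H) (X : Set H) : Prop :=
  ∀ f : ℕ → H, (∀ n, f n ∈ X) → code f ∈ X

/-- `S` is `*`-stationary: for every structure `𝔐` of finite type with universe `H`
there is `X ∈ S` with `^ωX ⊆ X` which is the universe of an elementary substructure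
of `𝔐`. -/
def StarStationary {H : Type} (code : (ℕ → H) → H) (S : Set (Set H)) : Prop :=
  ∀ L : FirstOrder.Language.{0, 0}, FinType L → ∀ [L.Structure H],
    ∃ X ∈ S, OmClosed code X ∧ ∃ E : L.ElementarySubstructure H, (E : Set H) = X

/-! ### Auxiliary definitions -/

universe u

/-- Branching type for term trees: leaves (indexed by `σ`) have no children,
nodes (indexed by `J`) have `ℕ`-many children. -/
def StarBr (σ J : Type u) : σ ⊕ J → Type u
  | Sum.inl _ => PEmpty
  | Sum.inr _ => ULift ℕ

/-- Evaluation of a term tree in `H`. -/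
def starEval {σ J : Type u} {H : Type} (base : σ → H) (G : J → (ℕ → H) → H) :
    WType (StarBr σ J) → H
  | WType.mk (Sum.inl s) _ => base s
  | WType.mk (Sum.inr j) f => G j (fun n => starEval base G (f (ULift.up n)))

/-- The key goodness property of a set `X`. -/
def Good {H : Type} (code : (ℕ → H) → H) (Φ : Set H → Set Ordinal) (μ : Cardinal)
    (C : Set Ordinal) (L : FirstOrder.Language.{0, 0}) [L.Structure H] (X : Set H) : Prop :=
  (Cardinal.mk X = μ ∧ C ∩ Φ X = ∅) ∧ OmClosed code X ∧
    ∃ E : L.ElementarySubstructure H, (E : Set H) = X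

lemma starMkWType_le {σ J : Type u} {ν : Cardinal.{u}} (hν : ℵ₀ ≤ ν) (hσ : #σ ≤ ν)
    (hJ : #J ≤ ν) (hpow : ν ^ ℵ₀ = ν) : #(WType (StarBr σ J)) ≤ ν := by
  apply WType.cardinalMk_le_of_le
  have h1 : (Cardinal.sum fun a : σ ⊕ J => ν ^ #(StarBr σ J a)) ≤
      Cardinal.sum fun _ : σ ⊕ J => ν := by
    apply Cardinal.sum_le_sum
    rintro (s | j)
    · have h : #(StarBr σ J (Sum.inl s)) = 0 := mk_eq_zero PEmpty
      rw [h, power_zero]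
      exact Cardinal.one_le_iff_ne_zero.2 (aleph0_pos.trans_le hν).ne'
    · have h : #(StarBr σ J (Sum.inr j)) = ℵ₀ := mk_eq_aleph0 (ULift ℕ)
      rw [h, hpow]
  refine h1.trans ?_
  rw [Cardinal.sum_const']
  have h2 : #(σ ⊕ J) ≤ ν := by
    rw [mk_sum, Cardinal.lift_id, Cardinal.lift_id]
    exact (add_le_add hσ hJ).trans (Cardinal.add_eq_self hν).le
  exact (mul_le_mul' h2 le_rfl).trans (Cardinal.mul_eq_self hν).le

lemma exists_closed_set {H : Type} {J : Type u} {μ : Cardinal.{0}} (hμ : ℵ₀ ≤ μ)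
    (hpow : μ ^ ℵ₀ = μ) (hJ : #J ≤ Cardinal.lift.{u} μ) (hHμ : μ ≤ #H)
    (G : J → (ℕ → H) → H) :
    ∃ X : Set H, #X = μ ∧ X.Nonempty ∧
      ∀ j (f : ℕ → H), (∀ n, f n ∈ X) → G j f ∈ X := by
  classical
  obtain ⟨s₀, hs₀⟩ := Cardinal.le_mk_iff_exists_set.1 hHμ
  set σ : Type u := ULift.{u} ↥s₀ with hσdef
  set X : Set H := Set.range (starEval (fun s : σ => (s.down : H)) G) with hX
  have hsub : s₀ ⊆ X := by
    intro x hx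
    exact ⟨WType.mk (Sum.inl (ULift.up ⟨x, hx⟩)) (fun e => e.elim), rfl⟩
  have hclosed : ∀ j (f : ℕ → H), (∀ n, f n ∈ X) → G j f ∈ X := by
    intro j f hf
    choose t ht using hf
    have hmem : starEval (fun s : σ => (s.down : H)) G
        (WType.mk (Sum.inr j) (fun k => t k.down)) ∈ X := ⟨_, rfl⟩
    have heq : starEval (fun s : σ => (s.down : H)) G
        (WType.mk (Sum.inr j) (fun k => t k.down)) = G j f := by
      show G j (fun n => starEval _ G (t n)) = G j f
      exact congrArg (G j) (funext ht)
    rwa [heq] at hmem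
  have hne : X.Nonempty := by
    have h : Nonempty s₀ := mk_ne_zero_iff.1 (by rw [hs₀]; exact (aleph0_pos.trans_le hμ).ne')
    obtain ⟨⟨x, hx⟩⟩ := h
    exact ⟨x, hsub hx⟩
  refine ⟨X, le_antisymm ?_ ?_, hne, hclosed⟩
  · have h1 : Cardinal.lift.{u} #(↥X) ≤ Cardinal.lift.{0} #(WType (StarBr σ J)) :=
      Cardinal.mk_range_le_lift
    have h2 : #(WType (StarBr σ J)) ≤ Cardinal.lift.{u} μ := by
      refine starMkWType_le ?_ ?_ hJ ?_
      · rw [← Cardinal.lift_aleph0.{u, 0}]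
        exact Cardinal.lift_le.2 hμ
      · rw [hσdef, Cardinal.mk_uLift, hs₀]
      · rw [← Cardinal.lift_aleph0.{u, 0}, ← Cardinal.lift_power, hpow]
    rw [Cardinal.lift_uzero] at h1
    exact Cardinal.lift_le.1 (h1.trans h2)
  · rw [← hs₀]
    exact Cardinal.mk_le_mk_of_subset hsub

lemma elementary_of_closed {H : Type} [Nonempty H] (L : FirstOrder.Language.{0, 0})
    [L.Structure H] (X : Set H)
    (hcl : ∀ (n : ℕ) (F : (L.sum L.skolem₁).Functions n) (x : Fin n → H),
      (∀ i, x i ∈ X) → Language.Structure.funMap F x ∈ X) :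
    ∃ E : L.ElementarySubstructure H, (E : Set H) = X := by
  let S : (L.sum L.skolem₁).Substructure H := ⟨X, fun {n} F x hx => hcl n F x hx⟩
  exact ⟨S.elementarySkolem₁Reduct, rfl⟩

/-- Universe-polymorphic main lemma. -/
theorem starMain (κ : Cardinal) (hreg : κ.IsRegular) (hκ : 2 ^ Cardinal.aleph 1 ≤ κ)
    (H : Type) (hH : Cardinal.mk H = κ) (code : (ℕ → H) → H)
    (Φ : Set H → Set Ordinal.{u})
    (hΦ : ∀ X : Set H, Cardinal.mk X = 2 ^ Cardinal.aleph 1 →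
      Φ X ⊆ Set.Iio omega1.{u} ∧ ¬ IsStationaryIn (Φ X) omega1.{u}) :
    ∃ (C : Set Ordinal.{u}) (S : Set (Set H)),
      IsClubIn C omega1.{u} ∧
      (∀ X ∈ S, Cardinal.mk X = 2 ^ Cardinal.aleph 1) ∧
      StarStationary code S ∧
      ∀ X ∈ S, C ∩ Φ X = ∅ := by
  classical
  set μ : Cardinal.{0} := 2 ^ Cardinal.aleph 1 with hμdef
  have hμℵ : ℵ₀ ≤ μ := (aleph0_le_aleph 1).trans (Cardinal.cantor (Cardinal.aleph 1)).le
  have hpow : μ ^ ℵ₀ = μ := by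
    rw [hμdef, ← Cardinal.power_mul,
      Cardinal.mul_eq_left (aleph0_le_aleph 1) (aleph0_le_aleph 1) Cardinal.aleph0_ne_zero]
  set ν : Cardinal.{u} := Cardinal.lift.{u} μ with hνdef
  have hν : ν = 2 ^ Cardinal.aleph.{u} 1 := by
    rw [hνdef, hμdef, Cardinal.lift_power, Cardinal.lift_two, Cardinal.lift_aleph,
      Ordinal.lift_one]
  haveI hneH : Nonempty H := by
    rw [← Cardinal.mk_ne_zero_iff, hH]
    exact hreg.pos.ne'
  have key : ∃ C : Set Ordinal.{u}, IsClubIn C omega1.{u} ∧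
      ∀ L : FirstOrder.Language.{0, 0}, FinType L → ∀ str : L.Structure H,
        ∃ X : Set H, @Good.{u} H code Φ μ C L str X := by
    by_contra hkey
    have step : ∀ C : Set Ordinal.{u}, IsClubIn C omega1.{u} →
        ∃ L : FirstOrder.Language.{0, 0}, FinType L ∧
          ∃ str : L.Structure H, ∀ X : Set H, ¬ @Good.{u} H code Φ μ C L str X := by
      intro C hC
      by_contra hcon
      refine hkey ⟨C, hC, fun L hfin str => ?_⟩
      by_contra hno
      exact hcon ⟨L, hfin, str, fun X hX => hno ⟨X, hX⟩⟩
    set I : Type u := Set omega1.{u}.ToType with hI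
    let e : Set.Iio omega1.{u} ≃o omega1.{u}.ToType := Ordinal.ToType.mk
    let decode : I → Set Ordinal.{u} := fun i => Subtype.val '' (e.symm '' i)
    let encode : Set Ordinal.{u} → I := fun C => {t | (e.symm t : Ordinal.{u}) ∈ C}
    have hde : ∀ C : Set Ordinal.{u}, C ⊆ Set.Iio omega1.{u} → decode (encode C) = C := by
      intro C hsub
      ext x
      constructor
      · rintro ⟨y, ⟨t, ht, rfl⟩, rfl⟩
        exact ht
      · intro hx
        refine ⟨e.symm (e ⟨x, hsub hx⟩), ⟨e ⟨x, hsub hx⟩, ?_, rfl⟩, ?_⟩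
        · show ((e.symm (e ⟨x, hsub hx⟩) : Set.Iio omega1.{u}) : Ordinal.{u}) ∈ C
          rw [OrderIso.symm_apply_apply]
          exact hx
        · rw [OrderIso.symm_apply_apply]
    have hI2 : ∀ i : I, ∃ L : FirstOrder.Language.{0, 0}, FinType L ∧
        ∃ str : L.Structure H,
          (IsClubIn (decode i) omega1.{u} →
            ∀ X : Set H, ¬ @Good.{u} H code Φ μ (decode i) L str X) := by
      intro i
      by_cases hc : IsClubIn (decode i) omega1.{u}
      · obtain ⟨L, hfin, str, hbad⟩ := step _ hc
        exact ⟨L, hfin, str, fun _ => hbad⟩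
      · haveI h1 : IsEmpty (Σ n, Language.empty.Functions n) :=
          ⟨fun p => (p.2 : Empty).elim⟩
        haveI h2 : IsEmpty (Σ n, Language.empty.Relations n) :=
          ⟨fun p => (p.2 : Empty).elim⟩
        exact ⟨Language.empty, ⟨⟨Equiv.equivOfIsEmpty _ (Fin 0)⟩, ⟨Equiv.equivOfIsEmpty _ (Fin 0)⟩⟩,
          Language.emptyStructure, fun h => absurd h hc⟩
    choose Lb hfinb strb hbadb using hI2
    let bigSt : ∀ i : I, ((Lb i).sum (Lb i).skolem₁).Structure H := fun i =>
      @Language.sumStructure _ _ H (strb i)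
        (@Language.skolem₁Structure (Lb i) H hneH (strb i))
    let J : Type u :=
      (Σ i : I, ULift.{u} (Σ n : ℕ, ((Lb i).sum (Lb i).skolem₁).Functions n)) ⊕ PUnit
    let G : J → (ℕ → H) → H := Sum.elim
      (fun p f => @Language.Structure.funMap _ H (bigSt p.1) p.2.down.1 p.2.down.2
        (fun k => f k))
      (fun _ f => code f)
    have hνℵ : ℵ₀ ≤ ν := by
      rw [hνdef, ← Cardinal.lift_aleph0.{u, 0}]
      exact Cardinal.lift_le.2 hμℵ
    have hJ : #J ≤ ν := by
      have hIcard : #I = ν := by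
        rw [hI, Cardinal.mk_set, Cardinal.mk_toType]
        show (2 : Cardinal) ^ (Cardinal.aleph.{u} 1).ord.card = ν
        rw [Cardinal.card_ord, hν]
      have hper : ∀ i : I,
          #(ULift.{u} (Σ n : ℕ, ((Lb i).sum (Lb i).skolem₁).Functions n)) ≤ ν := by
        intro i
        rw [Cardinal.mk_uLift]
        have hb : #(Σ n : ℕ, ((Lb i).sum (Lb i).skolem₁).Functions n) ≤ ℵ₀ := by
          refine (Language.card_functions_sum_skolem₁_le (L := Lb i)).trans ?_
          refine max_le le_rfl ?_
          haveI := (hfinb i).1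
          haveI := (hfinb i).2
          haveI : Finite (Lb i).Symbols := by
            rw [Language.Symbols]
            infer_instance
          exact Cardinal.mk_le_aleph0
        refine le_trans (Cardinal.lift_le.2 hb) ?_
        rw [Cardinal.lift_aleph0]
        exact hνℵ
      have h1 : #(Σ i : I, ULift.{u} (Σ n : ℕ, ((Lb i).sum (Lb i).skolem₁).Functions n)) ≤ ν := by
        rw [Cardinal.mk_sigma]
        refine le_trans (Cardinal.sum_le_sum _ (fun _ => ν) hper) ?_
        rw [Cardinal.sum_const', hIcard]
        exact (Cardinal.mul_eq_self hνℵ).le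
      show #((Σ i : I, ULift.{u} (Σ n : ℕ, ((Lb i).sum (Lb i).skolem₁).Functions n)) ⊕ PUnit) ≤ ν
      rw [Cardinal.mk_sum, Cardinal.lift_id, Cardinal.lift_id, Cardinal.mk_punit]
      exact (add_le_add h1 (Cardinal.one_le_iff_ne_zero.2
        (aleph0_pos.trans_le hνℵ).ne')).trans (Cardinal.add_eq_self hνℵ).le
    obtain ⟨X, hXcard, hXne, hXcl⟩ :=
      exists_closed_set hμℵ hpow (by rw [← hνdef]; exact hJ) (by rw [hH]; exact hκ) G
    obtain ⟨hΦsub, hΦns⟩ := hΦ X hXcard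
    have hclub : ∃ C₀ : Set Ordinal.{u}, IsClubIn C₀ omega1.{u} ∧ Φ X ∩ C₀ = ∅ := by
      by_contra hno
      push_neg at hno
      exact hΦns ⟨hΦsub, hno⟩
    obtain ⟨C₀, hC₀, hdisj⟩ := hclub
    set i₀ : I := encode C₀ with hi₀
    have hdec : decode i₀ = C₀ := hde C₀ hC₀.1
    have hclub' : IsClubIn (decode i₀) omega1.{u} := by rw [hdec]; exact hC₀
    refine hbadb i₀ hclub' X ?_
    rw [hdec]
    refine ⟨⟨hXcard, by rw [Set.inter_comm]; exact hdisj⟩, ?_, ?_⟩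
    · intro f hf
      exact hXcl (Sum.inr PUnit.unit) f hf
    · refine @elementary_of_closed H hneH (Lb i₀) (strb i₀) X ?_
      intro n F x hx
      have hmem := hXcl (Sum.inl ⟨i₀, ULift.up ⟨n, F⟩⟩)
        (fun m => if h : m < n then x ⟨m, h⟩ else hXne.some)
        (by
          intro m
          by_cases h : m < n
          · simpa [h] using hx ⟨m, h⟩
          · simpa [h] using hXne.some_mem)
      have harg : (fun k : Fin n =>
          (fun m => if h : m < n then x ⟨m, h⟩ else hXne.some) (k : ℕ)) = x := by
        funext k
        simp [k.isLt]
      show @Language.Structure.funMap _ H (bigSt i₀) n F x ∈ X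
      rw [← harg]
      exact hmem
  obtain ⟨C, hC, hstar⟩ := key
  refine ⟨C, {X : Set H | Cardinal.mk X = μ ∧ C ∩ Φ X = ∅}, hC, fun X hX => hX.1, ?_,
    fun X hX => hX.2⟩
  intro L hfin str
  obtain ⟨X, hG⟩ := hstar L hfin str
  obtain ⟨⟨h1, h2⟩, h3, h4⟩ := hG
  exact ⟨X, ⟨h1, h2⟩, h3, h4⟩

/-- Lemma 1 (key lemma) of the paper. -/
theorem stmt0 (κ : Cardinal) (hreg : κ.IsRegular) (hκ : 2 ^ Cardinal.aleph 1 ≤ κ)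
    (H : Type) (hH : Cardinal.mk H = κ) (code : (ℕ → H) → H)
    (Φ : Set H → Set Ordinal)
    (hΦ : ∀ X : Set H, Cardinal.mk X = 2 ^ Cardinal.aleph 1 →
      Φ X ⊆ Set.Iio omega1 ∧ ¬ IsStationaryIn (Φ X) omega1) :
    ∃ (C : Set Ordinal) (S : Set (Set H)),
      IsClubIn C omega1 ∧
      (∀ X ∈ S, Cardinal.mk X = 2 ^ Cardinal.aleph 1) ∧
      StarStationary code S ∧
      ∀ X ∈ S, C ∩ Φ X = ∅ := by
  exact starMain κ hreg hκ H hH code Φ hΦ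

end
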